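/- Duality gap bound from dual suboptimality: let g : ℝⁿ → ℝ be β-strongly convex with conjugate g* (which is (1/β)-smooth), let K ⊆ ℝⁿ be a compact convex set of diameter M, let p⋆ = max_{w ∈ K} −g*(−w), and let w ∈ K with d = −g*(−w) and x = ∇g*(−w). Then the Frank–Wolfe gap satisfies max_{v ∈ K} ⟨v − w, x⟩ ≤ (p⋆ − d) + M²/(2β), and if p⋆ − d ≤ M²/(2β) then max_{v ∈ K} ⟨v − w, x⟩ ≤ M·√(2(p⋆ − d)/β). -/

import Mathlib

open scoped RealInnerProductSpace

/-- The Fenchel conjugate (real-valued; finite when `g` is strongly convex). -/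
noncomputable def fenchel {n : ℕ} (g : EuclideanSpace ℝ (Fin n) → ℝ)
    (w : EuclideanSpace ℝ (Fin n)) : ℝ :=
  ⨆ x, (⟪w, x⟫ - g x)

section stmtAux
variable {n : ℕ} {g : EuclideanSpace ℝ (Fin n) → ℝ} {β : ℝ}

local notation "E" => EuclideanSpace ℝ (Fin n)

lemma norm_combo (a b : E) (t : ℝ) :
    ‖t • a + (1 - t) • b‖ ^ 2 = t * ‖a‖ ^ 2 + (1 - t) * ‖b‖ ^ 2 - t * (1 - t) * ‖a - b‖ ^ 2 := by
  have h : ∀ v : E, ‖v‖ ^ 2 = ⟪v, v⟫ := fun v => (real_inner_self_eq_norm_sq v).symm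
  rw [h, h, h, h]
  simp only [inner_add_left, inner_add_right, inner_sub_left, inner_sub_right,
    real_inner_smul_left, real_inner_smul_right, real_inner_comm b a]
  ring

-- affine-type lower bound on the convex part
lemma h_lower (hβ : 0 < β)
    (hsc : ConvexOn ℝ Set.univ (fun x : E => g x - β / 2 * ‖x‖ ^ 2)) :
    ∃ C : ℝ, 0 ≤ C ∧ ∀ u : E, -C * (1 + ‖u‖) ≤ g u - β / 2 * ‖u‖ ^ 2 := by
  set h : E → ℝ := fun x => g x - β / 2 * ‖x‖ ^ 2 with hh
  have hcont : Continuous h := by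
    exact continuousOn_univ.mp (hsc.continuousOn isOpen_univ)
  obtain ⟨u₀, _, hu₀⟩ := (isCompact_closedBall (0 : E) 1).exists_isMinOn
    ⟨0, Metric.mem_closedBall_self zero_le_one⟩ hcont.continuousOn
  set C₀ : ℝ := max (-(h u₀)) 0 with hC₀
  have hball : ∀ u : E, ‖u‖ ≤ 1 → -C₀ ≤ h u := by
    intro u hu
    have := hu₀ (by simpa [Metric.mem_closedBall, dist_eq_norm] using hu)
    have : h u₀ ≤ h u := this
    have h1 : -C₀ ≤ h u₀ := by
      have := le_max_left (-(h u₀)) 0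
      linarith
    linarith
  refine ⟨C₀ + |h 0|, by positivity, fun u => ?_⟩
  show -(C₀ + |h 0|) * (1 + ‖u‖) ≤ h u
  rcases le_or_gt ‖u‖ 1 with hu | hu
  · have := hball u hu
    have h2 : (0:ℝ) ≤ |h 0| := abs_nonneg _
    have h3 : (0:ℝ) ≤ ‖u‖ := norm_nonneg _
    have h4 : (0:ℝ) ≤ C₀ := le_max_right _ _
    nlinarith [mul_nonneg (add_nonneg h4 h2) h3]
  · have hpos : (0:ℝ) < ‖u‖ := by linarith
    set lam : ℝ := ‖u‖⁻¹ with hlam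
    have hl0 : 0 < lam := by positivity
    have hl1 : lam ≤ 1 := by
      rw [hlam]; rw [inv_le_one_iff₀]; right; linarith
    have hcomb := hsc.2 (Set.mem_univ u) (Set.mem_univ (0 : E))
      (le_of_lt hl0) (by linarith : (0:ℝ) ≤ 1 - lam) (by ring)
    simp only [smul_zero, add_zero] at hcomb
    have hnl : ‖lam • u‖ = 1 := by
      rw [norm_smul, hlam, Real.norm_eq_abs, abs_of_pos (by positivity)]
      field_simp
    have hb : -C₀ ≤ h (lam • u) := hball _ (le_of_eq hnl)
    -- hcomb : h (lam • u) ≤ lam • h u + (1-lam) • h 0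
    rw [smul_eq_mul, smul_eq_mul] at hcomb
    have habs : h 0 ≤ |h 0| := le_abs_self _
    have h4 : (0:ℝ) ≤ C₀ := le_max_right _ _
    -- -C₀ ≤ lam * h u + (1-lam)*|h 0|
    have key : -C₀ - (1 - lam) * |h 0| ≤ lam * h u := by nlinarith
    -- divide by lam : h u ≥ (-C₀ - (1-lam)|h0|)/lam ≥ -(C₀+|h0|)*‖u‖
    have hinv : lam * ‖u‖ = 1 := by rw [hlam]; exact inv_mul_cancel₀ hpos.ne'
    have h2 : (0:ℝ) ≤ |h 0| := abs_nonneg _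
    have step := mul_le_mul_of_nonneg_left key (norm_nonneg u)
    have step2 : ‖u‖ * (lam * h u) = h u := by
      rw [← mul_assoc, mul_comm ‖u‖ lam, hinv, one_mul]
    rw [step2] at step
    -- step : ‖u‖ * (-C₀ - (1-lam)*|h 0|) ≤ h u
    nlinarith [mul_nonneg (norm_nonneg u) h2, mul_nonneg (mul_nonneg hl0.le (norm_nonneg u)) h2,
      mul_nonneg h4 (norm_nonneg u)]

lemma fen_bddAbove (hβ : 0 < β)
    (hsc : ConvexOn ℝ Set.univ (fun x : E => g x - β / 2 * ‖x‖ ^ 2)) (z : E) :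
    BddAbove (Set.range fun u : E => ⟪z, u⟫ - g u) := by
  obtain ⟨C, hC0, hC⟩ := h_lower hβ hsc
  refine ⟨(‖z‖ + C) ^ 2 / (2 * β) + C, ?_⟩
  rintro _ ⟨u, rfl⟩
  have h1 : ⟪z, u⟫ ≤ ‖z‖ * ‖u‖ := real_inner_le_norm z u
  have h2 := hC u
  have h3 : (0:ℝ) ≤ ‖u‖ := norm_nonneg _
  have h4 : (0:ℝ) ≤ ‖z‖ := norm_nonneg _
  have h5 : (‖z‖ + C) ^ 2 / (2 * β) * (2 * β) = (‖z‖ + C) ^ 2 :=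
    div_mul_cancel₀ _ (by positivity)
  -- ⟪z,u⟫ - g u ≤ ‖z‖‖u‖ + C(1+‖u‖) - β/2 ‖u‖²
  nlinarith [sq_nonneg (‖z‖ + C - β * ‖u‖)]

lemma fen_ge (hβ : 0 < β)
    (hsc : ConvexOn ℝ Set.univ (fun x : E => g x - β / 2 * ‖x‖ ^ 2)) (z u : E) :
    ⟪z, u⟫ - g u ≤ fenchel g z :=
  le_ciSup (fen_bddAbove hβ hsc z) u

lemma fen_exists_lt (z : E) {ε : ℝ} (hε : 0 < ε) :
    ∃ u : E, fenchel g z - ε < ⟪z, u⟫ - g u := by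
  have : fenchel g z - ε < fenchel g z := by linarith
  exact exists_lt_of_lt_ciSup this

end stmtAux

section stmtAux2
variable {n : ℕ} {g : EuclideanSpace ℝ (Fin n) → ℝ} {β : ℝ}
local notation "E" => EuclideanSpace ℝ (Fin n)

lemma key_smooth (hβ : 0 < β)
    (hsc : ConvexOn ℝ Set.univ (fun x : E => g x - β / 2 * ‖x‖ ^ 2))
    (z₁ z₂ : E) {t : ℝ} (ht0 : 0 ≤ t) (ht1 : t ≤ 1) :
    t * fenchel g z₁ + (1 - t) * fenchel g z₂ - t * (1 - t) * ‖z₁ - z₂‖ ^ 2 / (2 * β)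
      ≤ fenchel g (t • z₁ + (1 - t) • z₂) := by
  refine le_of_forall_pos_le_add fun ε hε => ?_
  obtain ⟨u₁, hu₁⟩ := fen_exists_lt (g := g) z₁ hε
  obtain ⟨u₂, hu₂⟩ := fen_exists_lt (g := g) z₂ hε
  have hmain : ⟪t • z₁ + (1 - t) • z₂, t • u₁ + (1 - t) • u₂⟫ - g (t • u₁ + (1 - t) • u₂)
      ≤ fenchel g (t • z₁ + (1 - t) • z₂) := fen_ge hβ hsc _ _
  -- strong convexity of g
  have hbt : (0:ℝ) ≤ 1 - t := by linarith
  have habt : t + (1 - t) = 1 := by ring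
  have hconv := hsc.2 (Set.mem_univ u₁) (Set.mem_univ u₂) ht0 hbt habt
  dsimp only at hconv
  rw [smul_eq_mul, smul_eq_mul] at hconv
  have hn : ‖t • u₁ + (1 - t) • u₂‖ ^ 2
      = t * ‖u₁‖ ^ 2 + (1 - t) * ‖u₂‖ ^ 2 - t * (1 - t) * ‖u₁ - u₂‖ ^ 2 :=
    norm_combo u₁ u₂ t
  rw [hn] at hconv
  have hg : g (t • u₁ + (1 - t) • u₂)
      ≤ t * g u₁ + (1 - t) * g u₂ - β / 2 * (t * (1 - t) * ‖u₁ - u₂‖ ^ 2) := by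
    nlinarith [hconv]
  -- inner identity
  have hip : ⟪t • z₁ + (1 - t) • z₂, t • u₁ + (1 - t) • u₂⟫
      = t * ⟪z₁, u₁⟫ + (1 - t) * ⟪z₂, u₂⟫ - t * (1 - t) * ⟪z₁ - z₂, u₁ - u₂⟫ := by
    simp only [inner_add_left, inner_add_right, inner_sub_left, inner_sub_right,
      real_inner_smul_left, real_inner_smul_right]
    ring
  rw [hip] at hmain
  -- peter-paul
  have hpp : ⟪z₁ - z₂, u₁ - u₂⟫ - β / 2 * ‖u₁ - u₂‖ ^ 2 ≤ ‖z₁ - z₂‖ ^ 2 / (2 * β) := by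
    have h1 : ⟪z₁ - z₂, u₁ - u₂⟫ ≤ ‖z₁ - z₂‖ * ‖u₁ - u₂‖ := real_inner_le_norm _ _
    have h5 : ‖z₁ - z₂‖ ^ 2 / (2 * β) * (2 * β) = ‖z₁ - z₂‖ ^ 2 :=
      div_mul_cancel₀ _ (by positivity)
    nlinarith [sq_nonneg (‖z₁ - z₂‖ - β * ‖u₁ - u₂‖)]
  have htt : 0 ≤ t * (1 - t) := mul_nonneg ht0 (by linarith)
  have e1 : t * (fenchel g z₁ - ε) ≤ t * (⟪z₁, u₁⟫ - g u₁) :=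
    mul_le_mul_of_nonneg_left hu₁.le ht0
  have e2 : (1 - t) * (fenchel g z₂ - ε) ≤ (1 - t) * (⟪z₂, u₂⟫ - g u₂) :=
    mul_le_mul_of_nonneg_left hu₂.le (by linarith)
  have e3 : t * (1 - t) * (⟪z₁ - z₂, u₁ - u₂⟫ - β / 2 * ‖u₁ - u₂‖ ^ 2)
      ≤ t * (1 - t) * (‖z₁ - z₂‖ ^ 2 / (2 * β)) :=
    mul_le_mul_of_nonneg_left hpp htt
  have hrw : t * (1 - t) * ‖z₁ - z₂‖ ^ 2 / (2 * β) = t * (1 - t) * (‖z₁ - z₂‖ ^ 2 / (2 * β)) := by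
    ring
  rw [hrw]
  linarith [e1, e2, e3, hg, hmain]

lemma convexG (hβ : 0 < β)
    (hsc : ConvexOn ℝ Set.univ (fun x : E => g x - β / 2 * ‖x‖ ^ 2)) :
    ConvexOn ℝ Set.univ (fun z : E => ‖z‖ ^ 2 / (2 * β) - fenchel g z) := by
  refine ⟨convex_univ, fun z₁ _ z₂ _ a b ha hb hab => ?_⟩
  have hb' : b = 1 - a := by linarith
  subst hb'
  have hks := key_smooth hβ hsc z₁ z₂ ha (by linarith)
  have hn := norm_combo z₁ z₂ a
  simp only [smul_eq_mul]
  rw [hn]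
  have expand : (a * ‖z₁‖ ^ 2 + (1 - a) * ‖z₂‖ ^ 2 - a * (1 - a) * ‖z₁ - z₂‖ ^ 2) / (2 * β)
      = a * (‖z₁‖ ^ 2 / (2 * β)) + (1 - a) * (‖z₂‖ ^ 2 / (2 * β))
        - a * (1 - a) * ‖z₁ - z₂‖ ^ 2 / (2 * β) := by
    ring
  rw [expand]
  linarith [hks]

lemma smooth_ub (hβ : 0 < β)
    (hsc : ConvexOn ℝ Set.univ (fun x : E => g x - β / 2 * ‖x‖ ^ 2))
    {x y : E} (hx : HasGradientAt (fenchel g) x y) (z : E) :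
    fenchel g z ≤ fenchel g y + ⟪x, z - y⟫ + ‖z - y‖ ^ 2 / (2 * β) := by
  set G : E → ℝ := fun z => ‖z‖ ^ 2 / (2 * β) - fenchel g z with hG
  have hGconv : ConvexOn ℝ Set.univ G := convexG hβ hsc
  set φ : ℝ → ℝ := fun t => G (y + t • (z - y)) with hφ
  have hφconv : ConvexOn ℝ Set.univ φ := by
    have := hGconv.comp_affineMap (AffineMap.lineMap y z)
    rw [Set.preimage_univ] at this
    have heqφ : φ = G ∘ ⇑(AffineMap.lineMap y z) := by
      funext t
      simp only [hφ, Function.comp_apply, AffineMap.lineMap_apply_module]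
      congr 1
      module
    rw [heqφ]; exact this
  -- derivative of the line
  have hc : HasDerivAt (fun t : ℝ => y + t • (z - y)) (z - y) 0 := by
    simpa using ((hasDerivAt_id (0 : ℝ)).smul_const (z - y)).const_add y
  have hc0 : y + (0 : ℝ) • (z - y) = y := by simp
  -- derivative of fenchel part
  have hF : HasDerivAt (fun t : ℝ => fenchel g (y + t • (z - y))) ⟪x, z - y⟫ 0 := by
    have h1 : HasFDerivAt (fenchel g) (InnerProductSpace.toDual ℝ _ x) (y + (0:ℝ) • (z - y)) := by
      rw [hc0]; exact hx.hasFDerivAt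
    have h2 := h1.comp_hasDerivAt 0 hc
    simp only [InnerProductSpace.toDual_apply_apply] at h2
    exact h2
  -- derivative of quadratic part
  have hQ : HasDerivAt (fun t : ℝ => ‖y + t • (z - y)‖ ^ 2 / (2 * β))
      ((⟪y, z - y⟫ + ⟪z - y, y⟫) / (2 * β)) 0 := by
    have h1 := (hc.inner ℝ hc).div_const (2 * β)
    rw [hc0] at h1
    have h2 : (fun t : ℝ => ⟪y + t • (z - y), y + t • (z - y)⟫ / (2 * β))
        = fun t : ℝ => ‖y + t • (z - y)‖ ^ 2 / (2 * β) := by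
      funext t
      rw [real_inner_self_eq_norm_sq]
    rwa [h2] at h1
  have hφd : HasDerivAt φ ((⟪y, z - y⟫ + ⟪z - y, y⟫) / (2 * β) - ⟪x, z - y⟫) 0 :=
    hQ.sub hF
  have hslope := hφconv.le_slope_of_hasDerivAt (Set.mem_univ (0:ℝ)) (Set.mem_univ (1:ℝ))
    zero_lt_one hφd
  rw [slope_def_field] at hslope
  have hφ1 : φ 1 = G z := by
    simp only [hφ, one_smul]
    congr 1
    abel
  have hφ0 : φ 0 = G y := by
    simp only [hφ, hc0]
  rw [hφ1, hφ0] at hslope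
  -- hslope : (⟪y,z-y⟫+⟪z-y,y⟫)/(2β) - ⟪x,z-y⟫ ≤ (G z - G y)/(1-0)
  have hone : ((1:ℝ) - 0) = 1 := by norm_num
  rw [hone, div_one] at hslope
  have hGz : G z = ‖z‖ ^ 2 / (2 * β) - fenchel g z := rfl
  have hGy : G y = ‖y‖ ^ 2 / (2 * β) - fenchel g y := rfl
  rw [hGz, hGy] at hslope
  have hnorm : ‖z - y‖ ^ 2 = ‖z‖ ^ 2 - (⟪y, z - y⟫ + ⟪z - y, y⟫) - ‖y‖ ^ 2 := by
    have h : ∀ v : E, ‖v‖ ^ 2 = ⟪v, v⟫ := fun v => (real_inner_self_eq_norm_sq v).symm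
    rw [h, h, h]
    simp only [inner_sub_left, inner_sub_right, real_inner_comm y z]
    ring
  have hd2 : ‖z - y‖ ^ 2 / (2 * β) =
      ‖z‖ ^ 2 / (2 * β) - (⟪y, z - y⟫ + ⟪z - y, y⟫) / (2 * β) - ‖y‖ ^ 2 / (2 * β) := by
    rw [hnorm]; ring
  linarith [hslope, hd2]

end stmtAux2

/-- Duality gap bound from dual suboptimality: for `g` `β`-strongly convex with conjugate
`g*`, `K` compact convex of diameter `M`, `p⋆ = max_{w ∈ K} -g*(-w)`, `w ∈ K`,
`d = -g*(-w)` and `x = ∇g*(-w)`, the Frank–Wolfe gap satisfies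
`max_{v ∈ K} ⟪v - w, x⟫ ≤ (p⋆ - d) + M²/(2β)`, and if `p⋆ - d ≤ M²/(2β)` then
`max_{v ∈ K} ⟪v - w, x⟫ ≤ M √(2(p⋆ - d)/β)`. -/
theorem stmt18 {n : ℕ} (g : EuclideanSpace ℝ (Fin n) → ℝ) (β : ℝ) (hβ : 0 < β)
    (hlsc : LowerSemicontinuous g)
    (hsc : ConvexOn ℝ Set.univ (fun x => g x - β / 2 * ‖x‖ ^ 2))
    (K : Set (EuclideanSpace ℝ (Fin n))) (hcomp : IsCompact K) (hconv : Convex ℝ K)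
    (M : ℝ) (hM : ∀ u ∈ K, ∀ v ∈ K, ‖u - v‖ ≤ M)
    (pstar : ℝ) (hp : IsGreatest ((fun v => -(fenchel g (-v))) '' K) pstar)
    (w : EuclideanSpace ℝ (Fin n)) (hw : w ∈ K)
    (d : ℝ) (hd : d = -(fenchel g (-w)))
    (x : EuclideanSpace ℝ (Fin n)) (hx : HasGradientAt (fenchel g) x (-w)) :
    (∀ v ∈ K, ⟪v - w, x⟫ ≤ (pstar - d) + M ^ 2 / (2 * β)) ∧
    (pstar - d ≤ M ^ 2 / (2 * β) →
      ∀ v ∈ K, ⟪v - w, x⟫ ≤ M * Real.sqrt (2 * (pstar - d) / β)) := by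
  have h2β : (0:ℝ) < 2 * β := by positivity
  have hM0 : 0 ≤ M := by
    have := hM w hw w hw
    simpa using this
  have hdp : d ≤ pstar := by
    have := hp.2 ⟨w, hw, rfl⟩
    simpa [hd] using this
  -- key pointwise inequality
  have key : ∀ v ∈ K, ⟪v - w, x⟫ ≤ (pstar - d) + ‖v - w‖ ^ 2 / (2 * β) := by
    intro v hv
    have h1 := smooth_ub hβ hsc hx (-v)
    have hsub : (-v) - (-w) = -(v - w) := by abel
    rw [hsub] at h1
    rw [inner_neg_right, norm_neg] at h1
    have h2 : -(fenchel g (-v)) ≤ pstar := hp.2 ⟨v, hv, rfl⟩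
    have h3 : ⟪x, v - w⟫ = ⟪v - w, x⟫ := real_inner_comm _ _
    rw [h3] at h1
    -- h1 : fenchel g (-v) ≤ fenchel g (-w) - ⟪v-w,x⟫ + ‖v-w‖²/(2β)
    have h4 : fenchel g (-w) = -d := by rw [hd]; ring
    linarith [h1, h2, h4.le, h4.ge]
  have sqle : ∀ v ∈ K, ‖v - w‖ ^ 2 ≤ M ^ 2 := by
    intro v hv
    have := hM v hv w hw
    nlinarith [norm_nonneg (v - w)]
  constructor
  · intro v hv
    have h1 := key v hv
    have h2 : ‖v - w‖ ^ 2 / (2 * β) ≤ M ^ 2 / (2 * β) := by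
      gcongr
      exact hM v hv w hw
    linarith
  · intro hcond v hv
    set ε : ℝ := pstar - d with hε
    have hε0 : 0 ≤ ε := by rw [hε]; linarith
    -- scaled bound
    have hbound : ∀ t : ℝ, 0 < t → t ≤ 1 → ⟪v - w, x⟫ ≤ ε / t + t * M ^ 2 / (2 * β) := by
      intro t ht0 ht1
      have hvt : w + t • (v - w) ∈ K := by
        have h0 : (0:ℝ) ≤ 1 - t := by linarith
        have := hconv hw hv h0 ht0.le (by ring)
        have heq : (1 - t) • w + t • v = w + t • (v - w) := by module
        rwa [heq] at this
      have h1 := key _ hvt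
      have heq2 : w + t • (v - w) - w = t • (v - w) := by abel
      rw [heq2] at h1
      rw [real_inner_smul_left] at h1
      have hnrm : ‖t • (v - w)‖ ^ 2 = t ^ 2 * ‖v - w‖ ^ 2 := by
        rw [norm_smul, Real.norm_eq_abs, mul_pow, sq_abs]
      rw [hnrm] at h1
      have h2 : t ^ 2 * ‖v - w‖ ^ 2 ≤ t ^ 2 * M ^ 2 :=
        mul_le_mul_of_nonneg_left (sqle v hv) (by positivity)
      have h3 : t * ⟪v - w, x⟫ ≤ ε + t ^ 2 * M ^ 2 / (2 * β) := by
        have h2' : t ^ 2 * ‖v - w‖ ^ 2 / (2 * β) ≤ t ^ 2 * M ^ 2 / (2 * β) :=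
          (div_le_div_iff_of_pos_right h2β).mpr (mul_le_mul_of_nonneg_left (sqle v hv) (sq_nonneg t))
        linarith
      have h4 : ⟪v - w, x⟫ = (t * ⟪v - w, x⟫) / t := by field_simp
      rw [h4]
      have h5 : (ε + t ^ 2 * M ^ 2 / (2 * β)) / t = ε / t + t * M ^ 2 / (2 * β) := by
        field_simp
      rw [← h5]
      gcongr
    rcases eq_or_lt_of_le hε0 with hε0' | hεpos
    · -- ε = 0
      have hrhs : M * Real.sqrt (2 * ε / β) = 0 := by
        rw [← hε0']
        simp
      rw [hrhs]
      rcases eq_or_lt_of_le hM0 with hM0' | hMpos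
      · have hMv := hM v hv w hw
        rw [← hM0'] at hMv
        have h0 := norm_nonneg (v - w)
        have hvw : v - w = 0 := norm_eq_zero.mp (le_antisymm hMv h0)
        rw [hvw]
        simp
      · refine le_of_forall_pos_le_add fun δ hδ => ?_
        have hMsq : (0:ℝ) < M ^ 2 := by positivity
        set t : ℝ := min 1 (2 * β * δ / M ^ 2) with ht
        have ht0 : 0 < t := by
          apply lt_min one_pos
          positivity
        have ht1 : t ≤ 1 := min_le_left _ _
        have hb := hbound t ht0 ht1
        rw [← hε0'] at hb
        simp only [zero_div, zero_add] at hb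
        have ht2 : t ≤ 2 * β * δ / M ^ 2 := min_le_right _ _
        have : t * M ^ 2 ≤ 2 * β * δ := by
          rw [← le_div_iff₀ hMsq] at *
          exact ht2
        have : t * M ^ 2 / (2 * β) ≤ δ := by
          rw [div_le_iff₀ h2β]
          linarith
        linarith
    · -- ε > 0
      have hMpos : 0 < M := by
        rcases eq_or_lt_of_le hM0 with h | h
        · exfalso
          rw [← h] at hcond
          simp at hcond
          linarith
        · exact h
      set s : ℝ := Real.sqrt (2 * β * ε) with hs
      have hspos : 0 < s := Real.sqrt_pos.mpr (by positivity)
      have hs2 : s ^ 2 = 2 * β * ε := Real.sq_sqrt (by positivity)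
      clear_value ε s
      have h2βε : 2 * β * ε ≤ M ^ 2 := by
        have := (le_div_iff₀ h2β).mp hcond
        linarith
      have hsM : s ≤ M := by nlinarith
      have ht1 : s / M ≤ 1 := by
        rw [div_le_one hMpos]
        exact hsM
      have hb := hbound (s / M) (by positivity) ht1
      have e1 : ε / (s / M) = ε * M / s := div_div_eq_mul_div ε s M
      have e2 : ε * M / s = s * M / (2 * β) := by
        rw [div_eq_div_iff hspos.ne' h2β.ne']
        linear_combination (-M) * hs2
      have e3 : s / M * M ^ 2 / (2 * β) = s * M / (2 * β) := by
        field_simp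
      have hsqrt : Real.sqrt (2 * ε / β) = s / β := by
        have harg : 2 * ε / β = (s / β) ^ 2 := by
          rw [div_pow, div_eq_div_iff hβ.ne' (by positivity)]
          linear_combination (-β) * hs2
        rw [harg, Real.sqrt_sq (by positivity)]
      rw [hsqrt]
      have hfin : M * (s / β) = s * M / (2 * β) + s * M / (2 * β) := by
        field_simp
        ring
      rw [hfin]
      calc ⟪v - w, x⟫ ≤ ε / (s / M) + s / M * M ^ 2 / (2 * β) := hb
        _ = s * M / (2 * β) + s * M / (2 * β) := by rw [e1, e2, e3]
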